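/- For every n ∈ ℤ, a word w in the free monoid on the alphabet B represents the element b·x_n of T if and only if w = u b x_m for some integer m and some word u consisting only of the letters a and c in which the number of occurrences of the letter c equals n − m. -/

import Mathlib

/-- The alphabet of the monoid `T`: letters `a`, `b`, `c` and `x n`, `y n` for `n : ℤ`. -/
inductive TGen : Type
  | a : TGen
  | b : TGen
  | c : TGen
  | x : ℤ → TGen
  | y : ℤ → TGen
  deriving DecidableEq

/-- The defining relations of `T`: `a·b·x n = b·x n`, `a·b·y n = b·y (n+1)`,
`c·b·x n = b·x (n+1)` and `c·b·y n = b·y n` for `n ∈ ℤ`. -/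
inductive TRel : FreeMonoid TGen → FreeMonoid TGen → Prop
  | axr (n : ℤ) : TRel (.of .a * .of .b * .of (.x n)) (.of .b * .of (.x n))
  | ayr (n : ℤ) : TRel (.of .a * .of .b * .of (.y n)) (.of .b * .of (.y (n + 1)))
  | cxr (n : ℤ) : TRel (.of .c * .of .b * .of (.x n)) (.of .b * .of (.x (n + 1)))
  | cyr (n : ℤ) : TRel (.of .c * .of .b * .of (.y n)) (.of .b * .of (.y n))

/-- The monoid `T` presented by the generators `TGen` and the relations `TRel`. -/
abbrev T : Type := PresentedMonoid TRel

/-- The images of the generators in `T`. -/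
def gen (g : TGen) : T := PresentedMonoid.of TRel g

/-- The principal right ideal `sM` of a monoid. -/
def rIdeal {M : Type*} [Monoid M] (s : M) : Set M := {m | ∃ u, m = s * u}

/-- States of an automaton reading words from right to left. -/
inductive St : Type
  | e : St
  | xs : ℤ → St
  | good : ℤ → St
  | dead : St

/-- Transition function of the automaton. -/
def step : TGen → St → St
  | .a, .good k => .good k
  | .b, .xs k => .good k
  | .c, .good k => .good (k + 1)
  | .x k, .e => .xs k
  | _, _ => .dead

/-- `step` as a map to `Function.End St`. -/
def φg : TGen → Function.End St := step

lemma lift_ofList_apply (l : List TGen) (s : St) :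
    FreeMonoid.lift φg (FreeMonoid.ofList l) s = l.foldr step s := by
  induction l with
  | nil => rfl
  | cons g l ih =>
      rw [FreeMonoid.ofList_cons, map_mul]
      show φg g (FreeMonoid.lift φg (FreeMonoid.ofList l) s) = _
      rw [ih]; rfl

lemma hrel : ∀ v v' : FreeMonoid TGen, TRel v v' →
    FreeMonoid.lift φg v = FreeMonoid.lift φg v' := by
  intro v v' h
  cases h <;> funext s <;> cases s <;> rfl

lemma step_ne_e (g : TGen) (s : St) : step g s ≠ St.e := by
  cases g <;> cases s <;> simp [step]

lemma step_eq_xs (g : TGen) (s : St) (k : ℤ) (h : step g s = St.xs k) :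
    g = TGen.x k ∧ s = St.e := by
  cases g <;> cases s <;> simp_all [step]

lemma step_eq_good (g : TGen) (s : St) (k : ℤ) (h : step g s = St.good k) :
    (g = TGen.a ∧ s = St.good k) ∨ (g = TGen.c ∧ s = St.good (k - 1)) ∨
      (g = TGen.b ∧ s = St.xs k) := by
  cases g <;> cases s <;> simp_all [step] <;> omega

lemma foldr_eq_e (l : List TGen) (h : l.foldr step St.e = St.e) : l = [] := by
  cases l with
  | nil => rfl
  | cons g l => exact absurd h (step_ne_e _ _)

lemma foldr_eq_xs (l : List TGen) (k : ℤ) (h : l.foldr step St.e = St.xs k) :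
    l = [TGen.x k] := by
  cases l with
  | nil => exact St.noConfusion h
  | cons g l =>
      obtain ⟨rfl, hs⟩ := step_eq_xs g _ k h
      rw [foldr_eq_e l hs]

lemma foldr_eq_good (l : List TGen) : ∀ n : ℤ, l.foldr step St.e = St.good n →
    ∃ (m : ℤ) (u : List TGen), l = u ++ [TGen.b, TGen.x m] ∧
      (∀ g ∈ u, g = TGen.a ∨ g = TGen.c) ∧ (u.count TGen.c : ℤ) = n - m := by
  induction l with
  | nil => intro n h; exact St.noConfusion h
  | cons g l ih =>
      intro n h
      rcases step_eq_good g _ n h with ⟨rfl, hs⟩ | ⟨rfl, hs⟩ | ⟨rfl, hs⟩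
      · obtain ⟨m, u, hlu, hu, hc⟩ := ih n hs
        refine ⟨m, TGen.a :: u, by simp [hlu], ?_, ?_⟩
        · intro g hg
          rcases List.mem_cons.mp hg with rfl | hg
          · exact Or.inl rfl
          · exact hu g hg
        · simpa [List.count_cons] using hc
      · obtain ⟨m, u, hlu, hu, hc⟩ := ih (n - 1) hs
        refine ⟨m, TGen.c :: u, by simp [hlu], ?_, ?_⟩
        · intro g hg
          rcases List.mem_cons.mp hg with rfl | hg
          · exact Or.inr rfl
          · exact hu g hg
        · simp only [List.count_cons_self]
          push_cast
          omega
      · refine ⟨n, [], ?_, by simp, by simp⟩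
        rw [foldr_eq_xs l n hs]
        rfl

lemma mk_rel {v v' : FreeMonoid TGen} (h : TRel v v') :
    PresentedMonoid.mk TRel v = PresentedMonoid.mk TRel v' :=
  Quotient.sound (ConGen.Rel.of _ _ h)

lemma gen_abx (k : ℤ) :
    gen TGen.a * (gen TGen.b * gen (TGen.x k)) = gen TGen.b * gen (TGen.x k) := by
  have h := mk_rel (TRel.axr k)
  simp only [map_mul] at h
  rw [← mul_assoc]
  exact h

lemma gen_cbx (k : ℤ) :
    gen TGen.c * (gen TGen.b * gen (TGen.x k)) = gen TGen.b * gen (TGen.x (k + 1)) := by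
  have h := mk_rel (TRel.cxr k)
  simp only [map_mul] at h
  rw [← mul_assoc]
  exact h

lemma easy_dir (l : List TGen) : ∀ m : ℤ, (∀ g ∈ l, g = TGen.a ∨ g = TGen.c) →
    PresentedMonoid.mk TRel (FreeMonoid.ofList l * FreeMonoid.of TGen.b *
      FreeMonoid.of (TGen.x m)) = gen .b * gen (.x (m + l.count TGen.c)) := by
  induction l with
  | nil =>
      intro m _
      simp only [List.count_nil, Nat.cast_zero, add_zero]
      show PresentedMonoid.mk TRel (1 * FreeMonoid.of TGen.b * FreeMonoid.of (TGen.x m)) = _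
      rw [one_mul, map_mul]; rfl
  | cons g l ih =>
      intro m hg
      have hl : ∀ g ∈ l, g = TGen.a ∨ g = TGen.c := fun g hgl => hg g (List.mem_cons_of_mem _ hgl)
      have key := ih m hl
      simp only [FreeMonoid.ofList_cons, mul_assoc] at key ⊢
      rw [map_mul, key]
      rcases hg g List.mem_cons_self with rfl | rfl
      · show gen TGen.a * _ = _
        rw [gen_abx]
        congr 2
      · show gen TGen.c * _ = _
        rw [gen_cbx]
        have : m + (l.count TGen.c : ℤ) + 1 = m + ((TGen.c :: l).count TGen.c : ℤ) := by
          simp only [List.count_cons_self]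
          push_cast
          omega
        rw [this]

/-- A word `w` in the free monoid on the alphabet represents `b·xₙ` in `T` if and only if
`w = u b xₘ` for some `m ∈ ℤ` and some word `u` consisting only of the letters `a` and `c`
in which the number of occurrences of `c` equals `n - m`. -/
theorem T_words_for_bx (n : ℤ) (w : FreeMonoid TGen) :
    PresentedMonoid.mk TRel w = gen .b * gen (.x n) ↔
      ∃ (m : ℤ) (u : FreeMonoid TGen),
        w = u * FreeMonoid.of TGen.b * FreeMonoid.of (TGen.x m) ∧
        (∀ l ∈ u.toList, l = TGen.a ∨ l = TGen.c) ∧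
        (u.toList.count TGen.c : ℤ) = n - m := by
  constructor
  · intro h
    have hψ : PresentedMonoid.lift φg hrel (PresentedMonoid.mk TRel w)
        = PresentedMonoid.lift φg hrel (gen .b * gen (.x n)) := by rw [h]
    have hF : FreeMonoid.lift φg w = FreeMonoid.lift φg (FreeMonoid.of TGen.b *
        FreeMonoid.of (TGen.x n)) := hψ
    have : w.toList.foldr step St.e = St.good n := by
      have := congrFun hF St.e
      rw [show w = FreeMonoid.ofList w.toList from rfl, lift_ofList_apply] at this
      rw [this]
      rfl
    obtain ⟨m, u, hlu, hu, hc⟩ := foldr_eq_good w.toList n this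
    refine ⟨m, FreeMonoid.ofList u, ?_, by simpa using hu, by simpa using hc⟩
    show FreeMonoid.ofList w.toList = _
    rw [hlu, FreeMonoid.ofList_append,
      show FreeMonoid.ofList [TGen.b, TGen.x m]
          = FreeMonoid.of TGen.b * FreeMonoid.of (TGen.x m) from rfl, ← mul_assoc]
  · rintro ⟨m, u, rfl, hu, hc⟩
    rw [show u = FreeMonoid.ofList u.toList from rfl]
    rw [easy_dir u.toList m hu]
    have : m + (u.toList.count TGen.c : ℤ) = n := by omega
    rw [this]
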